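/- Let v : ℝ × [t₀, ∞) → ℝ be a bounded function, differentiable in t, satisfying 0 ≤ v(x, t) ≤ M for all x, t, and ∂v/∂t(x, t) ≤ d[∫ J(x-y) v(y, t) dy − v(x, t)] − r v(x, t) for all x ∈ ℝ, t ≥ t₀, where J ≥ 0 with ∫ J = 1 and d, r > 0. Then v(x, t) ≤ M e^{−r(t − t₀)} for all x ∈ ℝ and t ≥ t₀. -/

import Mathlib

open MeasureTheory Real

/-- If `0 ≤ v ≤ M` satisfies `∂v/∂t ≤ d[(J*v) - v] - r v` for `t ≥ t₀`, with `J ≥ 0`,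
`∫ J = 1`, `d, r, M > 0`, then `v(x, t) ≤ M e^{-r(t - t₀)}` for all `x` and `t ≥ t₀`. -/
theorem stmt7 (J : ℝ → ℝ) (d r M t₀ : ℝ) (hd : 0 < d) (hr : 0 < r) (hM : 0 < M)
    (hJ0 : ∀ z, 0 ≤ J z) (hJint : ∫ z : ℝ, J z = 1)
    (v vt : ℝ → ℝ → ℝ)
    (hbd : ∀ x t, 0 ≤ v x t ∧ v x t ≤ M)
    (hderiv : ∀ x t, t₀ ≤ t → HasDerivAt (fun τ => v x τ) (vt x t) t)
    (hineq : ∀ x t, t₀ ≤ t →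
      vt x t ≤ d * ((∫ y : ℝ, J (x - y) * v y t) - v x t) - r * v x t) :
    ∀ x t, t₀ ≤ t → v x t ≤ M * Real.exp (-r * (t - t₀)) := by
  have hJI : Integrable J := by
    by_contra h
    rw [integral_undef h] at hJint
    exact one_ne_zero hJint.symm
  -- main induction: v x t ≤ M e^{-r(t-t₀)} + M (d (t-t₀))^n / n!
  have key : ∀ n : ℕ, ∀ x t, t₀ ≤ t →
      v x t ≤ M * Real.exp (-r * (t - t₀)) + M * (d * (t - t₀)) ^ n / n.factorial := by
    intro n
    induction n with
    | zero =>
      intro x t ht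
      have h1 : v x t ≤ M := (hbd x t).2
      have h2 : 0 ≤ M * Real.exp (-r * (t - t₀)) := by positivity
      simp only [pow_zero, Nat.factorial_zero, Nat.cast_one, mul_one, div_one]
      nlinarith
    | succ n ih =>
      intro x t ht
      set C : ℝ → ℝ := fun s =>
        M * Real.exp (-r * (s - t₀)) + M * (d * (s - t₀)) ^ (n + 1) / (n + 1).factorial with hC
      -- bound on the nonlocal term, for every s ≥ t₀
      have hint : ∀ s, t₀ ≤ s → (∫ y : ℝ, J (x - y) * v y s) ≤
          M * Real.exp (-r * (s - t₀)) + M * (d * (s - t₀)) ^ n / n.factorial := by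
        intro s hs
        set Cn : ℝ := M * Real.exp (-r * (s - t₀)) + M * (d * (s - t₀)) ^ n / n.factorial with hCn
        have hgint : Integrable (fun y : ℝ => J (x - y) * Cn) := (hJI.comp_sub_left x).mul_const _
        have h1 : (∫ y : ℝ, J (x - y) * v y s) ≤ ∫ y : ℝ, J (x - y) * Cn :=
          integral_mono_of_nonneg
            (Filter.Eventually.of_forall fun y => mul_nonneg (hJ0 _) (hbd y s).1) hgint
            (Filter.Eventually.of_forall fun y =>
              mul_le_mul_of_nonneg_left (ih y s hs) (hJ0 _))
        have h2 : (∫ y : ℝ, J (x - y) * Cn) = Cn := by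
          rw [integral_mul_const, integral_sub_left_eq_self J volume x, hJint, one_mul]
        rw [h2] at h1
        exact h1
      -- auxiliary function h s = (v x s - C s) e^{(d+r)(s-t₀)} is antitone on [t₀,∞)
      set h : ℝ → ℝ := fun s => (v x s - C s) * Real.exp ((d + r) * (s - t₀)) with hh
      have hCd : ∀ s : ℝ, HasDerivAt C
          (M * (Real.exp (-r * (s - t₀)) * (-r)) +
            M * ((↑(n + 1) : ℝ) * (d * (s - t₀)) ^ n * d) / (n + 1).factorial) s := by
        intro s
        have e1 : HasDerivAt (fun s : ℝ => -r * (s - t₀)) (-r) s := by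
          simpa using ((hasDerivAt_id s).sub_const t₀).const_mul (-r)
        have eexp := e1.exp
        have p1 : HasDerivAt (fun s : ℝ => d * (s - t₀)) d s := by
          simpa using ((hasDerivAt_id s).sub_const t₀).const_mul d
        have ppow := p1.pow (n + 1)
        simp only [Nat.add_sub_cancel] at ppow
        exact (eexp.const_mul M).add ((ppow.const_mul M).div_const _)
      have hhd : ∀ s, t₀ ≤ s → HasDerivAt h
          ((vt x s - (M * (Real.exp (-r * (s - t₀)) * (-r)) +
              M * ((↑(n + 1) : ℝ) * (d * (s - t₀)) ^ n * d) / (n + 1).factorial)) *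
              Real.exp ((d + r) * (s - t₀)) +
            (v x s - C s) * (Real.exp ((d + r) * (s - t₀)) * (d + r))) s := by
        intro s hs
        have hg : HasDerivAt (fun s => v x s - C s) (vt x s -
            (M * (Real.exp (-r * (s - t₀)) * (-r)) +
              M * ((↑(n + 1) : ℝ) * (d * (s - t₀)) ^ n * d) / (n + 1).factorial)) s :=
          (hderiv x s hs).sub (hCd s)
        have e2 : HasDerivAt (fun s : ℝ => (d + r) * (s - t₀)) (d + r) s := by
          simpa using ((hasDerivAt_id s).sub_const t₀).const_mul (d + r)
        exact hg.mul e2.exp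
      have hanti : AntitoneOn h (Set.Ici t₀) := by
        apply antitoneOn_of_deriv_nonpos (convex_Ici t₀)
        · exact fun s hs => ((hhd s hs).continuousAt).continuousWithinAt
        · intro s hs
          rw [interior_Ici] at hs
          exact ((hhd s (le_of_lt hs)).differentiableAt).differentiableWithinAt
        · intro s hs
          rw [interior_Ici] at hs
          have hs' : t₀ ≤ s := le_of_lt hs
          rw [(hhd s hs').deriv]
          have hτ : 0 ≤ s - t₀ := by linarith
          have hpnn : 0 ≤ (d * (s - t₀)) ^ n := pow_nonneg (mul_nonneg hd.le hτ) n
          have hE0 : 0 < Real.exp ((d + r) * (s - t₀)) := Real.exp_pos _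
          have hF : ((n + 1).factorial : ℝ) = ((n : ℝ) + 1) * n.factorial := by
            push_cast [Nat.factorial_succ]; ring
          have hF0 : (0 : ℝ) < n.factorial := by exact_mod_cast n.factorial_pos
          have hvt : vt x s ≤ d * ((M * Real.exp (-r * (s - t₀)) +
              M * (d * (s - t₀)) ^ n / n.factorial) - v x s) - r * v x s := by
            have h1 := mul_le_mul_of_nonneg_left (hint s hs') hd.le
            have h2 := hineq x s hs'
            nlinarith [h1, h2]
          have hbr : (vt x s - (M * (Real.exp (-r * (s - t₀)) * (-r)) +
              M * ((↑(n + 1) : ℝ) * (d * (s - t₀)) ^ n * d) / (n + 1).factorial)) +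
              (v x s - C s) * (d + r) ≤ 0 := by
            have hkey : M * ((↑(n + 1) : ℝ) * (d * (s - t₀)) ^ n * d) / ((n + 1).factorial : ℝ) =
                d * (M * (d * (s - t₀)) ^ n / n.factorial) := by
              rw [hF]; push_cast; field_simp
            have hq1 : 0 ≤ (d * (s - t₀)) ^ (n + 1) := pow_nonneg (mul_nonneg hd.le hτ) _
            have hF1 : (0 : ℝ) < (n + 1).factorial := by exact_mod_cast (n + 1).factorial_pos
            have hqn : 0 ≤ (d + r) * (M * (d * (s - t₀)) ^ (n + 1) / ((n + 1).factorial : ℝ)) := by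
              apply mul_nonneg (by positivity)
              exact div_nonneg (mul_nonneg hM.le hq1) hF1.le
            have heq : (d * ((M * Real.exp (-r * (s - t₀)) +
                M * (d * (s - t₀)) ^ n / n.factorial) - v x s) - r * v x s) -
                (M * (Real.exp (-r * (s - t₀)) * (-r)) +
                  d * (M * (d * (s - t₀)) ^ n / n.factorial)) +
                (v x s - (M * Real.exp (-r * (s - t₀)) +
                  M * (d * (s - t₀)) ^ (n + 1) / (n + 1).factorial)) * (d + r) =
                -((d + r) * (M * (d * (s - t₀)) ^ (n + 1) / ((n + 1).factorial : ℝ))) := by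
              ring
            rw [hkey]
            simp only [hC]
            linarith [hvt, hqn, heq]
          have := mul_le_mul_of_nonneg_right hbr hE0.le
          linarith [this]
      -- conclude from h t ≤ h t₀ ≤ 0
      have ht0 : h t ≤ h t₀ := hanti (Set.self_mem_Ici) ht ht
      have hCt₀ : C t₀ = M := by
        rw [hC]
        simp [Real.exp_zero]
      have hht₀ : h t₀ ≤ 0 := by
        rw [hh]
        simp only [sub_self, mul_zero, Real.exp_zero, mul_one, hCt₀]
        nlinarith [(hbd x t₀).2]
      have hE0 : 0 < Real.exp ((d + r) * (t - t₀)) := Real.exp_pos _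
      have hfin : (v x t - C t) * Real.exp ((d + r) * (t - t₀)) ≤ 0 := le_trans ht0 hht₀
      simp only [hC] at hfin
      nlinarith [hfin, hE0]
  -- take n → ∞
  intro x t ht
  have hlim : Filter.Tendsto
      (fun n : ℕ => M * Real.exp (-r * (t - t₀)) + M * (d * (t - t₀)) ^ n / n.factorial)
      Filter.atTop (nhds (M * Real.exp (-r * (t - t₀)) + M * 0)) := by
    apply Filter.Tendsto.add tendsto_const_nhds
    have h1 := FloorSemiring.tendsto_pow_div_factorial_atTop (K := ℝ) (d * (t - t₀))
    have h2 := h1.const_mul M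
    simpa [mul_div_assoc] using h2
  have := ge_of_tendsto' hlim (fun n => key n x t ht)
  simpa using this
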